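/- For every ordering γ of the q adversary pairs (a bijection from the set of adversary pairs to {1,…,q}), the strategy matrix U = U(q) output by the greedy recursion (with d_k = min{z_i(k−1), z_j(k−1)} allocated symmetrically across the k-th adversary pair {i,j} = γ^{-1}(k) and reserves u_ii = z_i(q)) is a pure strategy Nash equilibrium of the power allocation game. -/

import Mathlib

open Finset

/-- An admissible strategy matrix: nonnegative entries, zero allocation to
non-neighbors, and row `i` sums to the total power `p i`. -/
def Admissible {n : ℕ} (p : Fin n → ℝ) (F A : Fin n → Finset (Fin n))
    (U : Fin n → Fin n → ℝ) : Prop :=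
  (∀ i j, 0 ≤ U i j) ∧
  (∀ i j, j ≠ i → j ∉ F i → j ∉ A i → U i j = 0) ∧
  (∀ i, ∑ j, U i j = p i)

/-- The support `σ_i(U) = u_ii + Σ_{j∈F_i} u_ji + Σ_{j∈A_i} u_ij`. -/
def supportOf {n : ℕ} (F A : Fin n → Finset (Fin n)) (U : Fin n → Fin n → ℝ)
    (i : Fin n) : ℝ :=
  U i i + ∑ j ∈ F i, U j i + ∑ j ∈ A i, U i j

/-- The threat `τ_i(U) = Σ_{j∈A_i} u_ji`. -/
def threatOf {n : ℕ} (A : Fin n → Finset (Fin n)) (U : Fin n → Fin n → ℝ)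
    (i : Fin n) : ℝ :=
  ∑ j ∈ A i, U j i

/-- A unilateral deviation by country `i` from `U`: an admissible matrix `V`
agreeing with `U` on every row except possibly row `i`. -/
def Deviation {n : ℕ} (p : Fin n → ℝ) (F A : Fin n → Finset (Fin n))
    (U V : Fin n → Fin n → ℝ) (i : Fin n) : Prop :=
  Admissible p F A V ∧ ∀ k, k ≠ i → V k = U k

/-- Pure strategy Nash equilibrium: `U` is admissible and no country `i` has a
unilateral deviation `V` it strictly prefers, where `i` strictly prefers `V`
to `U` iff `x_i(U)` is unsafe (`σ_i(U) < τ_i(U)`) and `x_i(V)` is safe or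
precarious (`τ_i(V) ≤ σ_i(V)`). -/
def NashEq {n : ℕ} (p : Fin n → ℝ) (F A : Fin n → Finset (Fin n))
    (U : Fin n → Fin n → ℝ) : Prop :=
  Admissible p F A U ∧
    ∀ i V, Deviation p F A U V i →
      ¬ (supportOf F A U i < threatOf A U i ∧
          threatOf A V i ≤ supportOf F A V i)

/-- Incidence matrix of the edges/adversary pairs enumerated by `e`. -/
def incB {n q : ℕ} (e : Fin q → Fin n × Fin n) (i : Fin n) (k : Fin q) : ℝ :=
  if i = (e k).1 ∨ i = (e k).2 then 1 else 0

/-- The greedy recursion: `z 0 = p` and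
`z (k+1) = z k − min{z_{i}(k), z_{j}(k)}·(e_i + e_j)` for the `(k+1)`-th edge
`{i,j}` (when `k < q`). -/
def greedyZ {n q : ℕ} (p : Fin n → ℝ) (e : Fin q → Fin n × Fin n) :
    ℕ → Fin n → ℝ
  | 0 => p
  | k + 1 => fun i =>
      if h : k < q then
        greedyZ p e k i -
          min (greedyZ p e k (e ⟨k, h⟩).1) (greedyZ p e k (e ⟨k, h⟩).2) *
            ((if i = (e ⟨k, h⟩).1 then (1 : ℝ) else 0) +
              (if i = (e ⟨k, h⟩).2 then (1 : ℝ) else 0))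
      else greedyZ p e k i

/-- The strategy matrix constructed from a decomposition: `u_ij = u_ji = d_k`
on the `k`-th adversary pair `{i,j}`, reserves `u_ii = c_i`, zeros elsewhere. -/
def stratU {n q : ℕ} (e : Fin q → Fin n × Fin n) (d : Fin q → ℝ)
    (c : Fin n → ℝ) : Fin n → Fin n → ℝ :=
  fun i j => (if i = j then c i else 0) +
    ∑ k, if e k = (i, j) ∨ e k = (j, i) then d k else 0


section Aux13
variable {n q : ℕ} (p : Fin n → ℝ) (pair : Fin q → Fin n × Fin n)

lemma greedyZ_nonneg (hp : ∀ i, 0 ≤ p i)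
    (hne : ∀ k : Fin q, (pair k).1 ≠ (pair k).2) :
    ∀ m i, 0 ≤ greedyZ p pair m i := by
  intro m
  induction m with
  | zero => exact hp
  | succ m ih =>
    intro i
    show 0 ≤ greedyZ p pair (m + 1) i
    simp only [greedyZ]
    by_cases h : m < q
    · rw [dif_pos h]
      rcases eq_or_ne i (pair ⟨m, h⟩).1 with h1 | h1
      · have h2 : i ≠ (pair ⟨m, h⟩).2 := h1 ▸ hne ⟨m, h⟩
        rw [if_pos h1, if_neg h2]
        have : min (greedyZ p pair m (pair ⟨m, h⟩).1) (greedyZ p pair m (pair ⟨m, h⟩).2)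
            ≤ greedyZ p pair m i := h1 ▸ min_le_left _ _
        nlinarith [this]
      · rcases eq_or_ne i (pair ⟨m, h⟩).2 with h2 | h2
        · rw [if_neg h1, if_pos h2]
          have : min (greedyZ p pair m (pair ⟨m, h⟩).1) (greedyZ p pair m (pair ⟨m, h⟩).2)
              ≤ greedyZ p pair m i := h2 ▸ min_le_right _ _
          nlinarith [this]
        · rw [if_neg h1, if_neg h2]
          simpa using ih i
    · rw [dif_neg h]; exact ih i

lemma greedyZ_eq (hne : ∀ k : Fin q, (pair k).1 ≠ (pair k).2) (i : Fin n) :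
    ∀ m, m ≤ q →
      greedyZ p pair m i = p i - ∑ k ∈ Finset.range m,
        (if h : k < q then
          (if i = (pair ⟨k, h⟩).1 ∨ i = (pair ⟨k, h⟩).2 then
            min (greedyZ p pair k (pair ⟨k, h⟩).1) (greedyZ p pair k (pair ⟨k, h⟩).2)
          else 0)
        else 0) := by
  intro m
  induction m with
  | zero => simp [greedyZ]
  | succ m ih =>
    intro hm
    have h : m < q := hm
    have ihm := ih (Nat.le_of_lt h)
    show greedyZ p pair (m + 1) i = _
    simp only [greedyZ]
    rw [dif_pos h, Finset.sum_range_succ, dif_pos h, ihm]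
    rcases eq_or_ne i (pair ⟨m, h⟩).1 with h1 | h1
    · have h2 : i ≠ (pair ⟨m, h⟩).2 := h1 ▸ hne ⟨m, h⟩
      rw [if_pos h1, if_neg h2, if_pos (Or.inl h1)]
      ring
    · rcases eq_or_ne i (pair ⟨m, h⟩).2 with h2 | h2
      · rw [if_neg h1, if_pos h2, if_pos (Or.inr h2)]
        ring
      · rw [if_neg h1, if_neg h2, if_neg (by tauto)]
        ring

lemma sum_ite_pair (k : Fin q) (hk : (pair k).1 ≠ (pair k).2) (i : Fin n) (x : ℝ) :
    ∑ j, (if pair k = (i, j) ∨ pair k = (j, i) then x else 0)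
      = if i = (pair k).1 ∨ i = (pair k).2 then x else 0 := by
  rcases eq_or_ne i (pair k).1 with h1 | h1
  · have h2 : i ≠ (pair k).2 := h1 ▸ hk
    rw [if_pos (Or.inl h1)]
    rw [Finset.sum_eq_single (pair k).2]
    · rw [if_pos (Or.inl (by rw [Prod.ext_iff]; exact ⟨h1.symm, rfl⟩))]
    · intro j _ hj
      rw [if_neg]
      rintro (he | he)
      · exact hj (congrArg Prod.snd he).symm
      · exact h2 (congrArg Prod.snd he).symm
    · intro hb; exact absurd (Finset.mem_univ _) hb
  · rcases eq_or_ne i (pair k).2 with h2 | h2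
    · rw [if_pos (Or.inr h2)]
      rw [Finset.sum_eq_single (pair k).1]
      · rw [if_pos (Or.inr (by rw [Prod.ext_iff]; exact ⟨rfl, h2.symm⟩))]
      · intro j _ hj
        rw [if_neg]
        rintro (he | he)
        · exact h1 (congrArg Prod.fst he).symm
        · exact hj (congrArg Prod.fst he).symm
      · intro hb; exact absurd (Finset.mem_univ _) hb
    · rw [if_neg (by tauto)]
      apply Finset.sum_eq_zero
      intro j _
      rw [if_neg]
      rintro (he | he)
      · exact h1 (congrArg Prod.fst he).symm
      · exact h2 (congrArg Prod.snd he).symm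

lemma stratU_symm (d : Fin q → ℝ) (c : Fin n → ℝ) (i j : Fin n) :
    stratU pair d c i j = stratU pair d c j i := by
  unfold stratU
  congr 1
  · rcases eq_or_ne i j with h | h
    · subst h; rfl
    · rw [if_neg h, if_neg h.symm]
  · exact Finset.sum_congr rfl fun k _ => if_congr or_comm rfl rfl

end Aux13

/-- for every enumeration of the adversary pairs, the strategy
matrix output by the greedy recursion (symmetric allocations
`d_k = min{z_i(k−1), z_j(k−1)}` on the `k`-th adversary pair, reserves
`u_ii = z_i(q)`) is a pure strategy Nash equilibrium. -/
theorem stmt13 (n q : ℕ) (p : Fin n → ℝ) (hp : ∀ i, 0 ≤ p i)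
    (F A : Fin n → Finset (Fin n))
    (hFi : ∀ i, i ∉ F i) (hAi : ∀ i, i ∉ A i)
    (hFA : ∀ i, Disjoint (F i) (A i))
    (hFsymm : ∀ i j, j ∈ F i ↔ i ∈ F j)
    (hAsymm : ∀ i j, j ∈ A i ↔ i ∈ A j)
    (pair : Fin q → Fin n × Fin n)
    (hadv : ∀ k, (pair k).2 ∈ A (pair k).1)
    (henum : ∀ i j, j ∈ A i → ∃! k, pair k = (i, j) ∨ pair k = (j, i)) :
    NashEq p F A
      (stratU pair
        (fun k => min (greedyZ p pair k.1 (pair k).1)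
          (greedyZ p pair k.1 (pair k).2))
        (fun i => greedyZ p pair q i)) := by
  classical
  set d : Fin q → ℝ := fun k => min (greedyZ p pair k.1 (pair k).1)
      (greedyZ p pair k.1 (pair k).2) with hd
  set c : Fin n → ℝ := fun i => greedyZ p pair q i with hc
  set U : Fin n → Fin n → ℝ := stratU pair d c with hU
  have hne : ∀ k : Fin q, (pair k).1 ≠ (pair k).2 := by
    intro k hkk
    exact hAi (pair k).1 (hkk ▸ hadv k)
  have hz : ∀ m i, 0 ≤ greedyZ p pair m i := greedyZ_nonneg p pair hp hne
  have hd0 : ∀ k, 0 ≤ d k := fun k => le_min (hz _ _) (hz _ _)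
  have hc0 : ∀ i, 0 ≤ c i := fun i => hz q i
  have hUnn : ∀ i j, 0 ≤ U i j := by
    intro i j
    apply add_nonneg
    · show 0 ≤ (if i = j then c i else 0)
      split
      · exact hc0 i
      · exact le_rfl
    · apply Finset.sum_nonneg
      intro k _
      split
      · exact hd0 k
      · exact le_rfl
  have hUzero : ∀ i j, j ≠ i → j ∉ F i → j ∉ A i → U i j = 0 := by
    intro i j hji hjF hjA
    show (if i = j then c i else 0) + _ = 0
    rw [if_neg hji.symm]
    rw [zero_add]
    apply Finset.sum_eq_zero
    intro k _
    rw [if_neg]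
    rintro (he | he)
    · exact hjA (by have := hadv k; rw [he] at this; exact this)
    · exact hjA ((hAsymm i j).mpr (by have := hadv k; rw [he] at this; exact this))
  have hrow : ∀ i, ∑ j, U i j = p i := by
    intro i
    have : ∑ j, U i j = c i + ∑ k : Fin q,
        (if i = (pair k).1 ∨ i = (pair k).2 then d k else 0) := by
      show ∑ j, ((if i = j then c i else 0) + _) = _
      rw [Finset.sum_add_distrib, Finset.sum_ite_eq, if_pos (Finset.mem_univ i),
        Finset.sum_comm]
      congr 1
      exact Finset.sum_congr rfl fun k _ => sum_ite_pair pair k (hne k) i (d k)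
    rw [this]
    have hsum : ∑ k : Fin q, (if i = (pair k).1 ∨ i = (pair k).2 then d k else 0)
        = ∑ k ∈ Finset.range q, (if h : k < q then
            (if i = (pair ⟨k, h⟩).1 ∨ i = (pair ⟨k, h⟩).2 then
              min (greedyZ p pair k (pair ⟨k, h⟩).1) (greedyZ p pair k (pair ⟨k, h⟩).2)
            else 0) else 0) := by
      rw [← Fin.sum_univ_eq_sum_range]
      apply Finset.sum_congr rfl
      intro k _
      rw [dif_pos k.isLt]
    rw [hsum]
    have hci : c i = greedyZ p pair q i := rfl
    rw [hci, greedyZ_eq p pair hne i q le_rfl]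
    ring
  have hadm : Admissible p F A U := ⟨hUnn, hUzero, hrow⟩
  have hστ : ∀ i, threatOf A U i ≤ supportOf F A U i := by
    intro i
    unfold supportOf threatOf
    have hsymm : ∑ j ∈ A i, U i j = ∑ j ∈ A i, U j i :=
      Finset.sum_congr rfl fun j _ => stratU_symm pair d c i j
    have h1 : 0 ≤ U i i := hUnn i i
    have h2 : 0 ≤ ∑ j ∈ F i, U j i := Finset.sum_nonneg fun j _ => hUnn j i
    linarith [hsymm.ge, hsymm.le]
  refine ⟨hadm, ?_⟩
  rintro i V _ ⟨hlt, -⟩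
  exact absurd hlt (not_lt.mpr (hστ i))
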